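/- Let U be a VLA-J-SS over ℂ. Then the linear span of the commutator defect vectors u_m(v_nw) − v_n(u_mw) − Σ_{i≥0} binom(m,i)·(u_iv)_{m+n−i}w, over all u,v,w ∈ U and m,n ∈ ℕ, equals the linear span of the Jacobi defect vectors Σ_{i≥0} (−1)^i·binom(k,i)·( u_{m+k−i}(v_{n+i}w) − (−1)^k·v_{n+k−i}(u_{m+i}w) ) − Σ_{i≥0} binom(m,i)·(u_{k+i}v)_{m+n−i}w, over all u,v,w ∈ U and k,m,n ∈ ℕ. -/

import Mathlib

open scoped BigOperators

noncomputable section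

/-- A VLA-J-SS over `ℂ`: a vector space `U` with a derivation `D` and bilinear products
`mul n` for `n : ℕ`, satisfying truncation and the `D`-compatibility relations (but not
necessarily the half Jacobi identity or half skew symmetry). -/
structure VLAJSS (U : Type*) [AddCommGroup U] [Module ℂ U] where
  D : U →ₗ[ℂ] U
  mul : ℕ → U →ₗ[ℂ] U →ₗ[ℂ] U
  trunc : ∀ u v : U, ∃ N : ℕ, ∀ n : ℕ, N ≤ n → mul n u v = 0
  dLeft : ∀ (n : ℕ) (u v : U), mul (n + 1) (D u) v = (-((n : ℂ) + 1)) • mul n u v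
  dLeftZero : ∀ u v : U, mul 0 (D u) v = 0
  leibniz : ∀ (n : ℕ) (u v : U), D (mul n u v) = mul n (D u) v + mul n u (D v)

variable {U : Type*} [AddCommGroup U] [Module ℂ U]

/-- The set of commutator defect vectors of a VLA-J-SS. -/
def CommDefects (A : VLAJSS U) : Set U :=
  {x : U | ∃ (u v w : U) (m n : ℕ),
    x = A.mul m u (A.mul n v w) - A.mul n v (A.mul m u w)
      - ∑ᶠ i : ℕ, ((Nat.choose m i : ℂ)) • A.mul (m + n - i) (A.mul i u v) w}

/-- The set of Jacobi defect vectors of a VLA-J-SS. -/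
def JacobiDefects (A : VLAJSS U) : Set U :=
  {x : U | ∃ (u v w : U) (k m n : ℕ),
    x = (∑ᶠ i : ℕ, ((-1 : ℂ) ^ i * (Nat.choose k i : ℂ)) •
          (A.mul (m + k - i) u (A.mul (n + i) v w)
            - ((-1 : ℂ) ^ k) • A.mul (n + k - i) v (A.mul (m + i) u w)))
      - ∑ᶠ i : ℕ, ((Nat.choose m i : ℂ)) • A.mul (m + n - i) (A.mul (k + i) u v) w}

/-- Alternating sum of products of binomial coefficients. -/
lemma binom_alt (k : ℕ) : ∀ m j : ℕ,
    ∑ i ∈ Finset.range (k+1),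
      ((-1:ℂ)^i * (k.choose i : ℂ) * ((m+k-i).choose j : ℂ))
    = if k ≤ j then ((m.choose (j-k) : ℂ)) else 0 := by
  induction k with
  | zero => intro m j; simp
  | succ k ih =>
    intro m j
    have hT : ∑ i ∈ Finset.range (k+1),
        ((-1:ℂ)^i * (k.choose (i+1) : ℂ) * ((m+k-i).choose j : ℂ))
        = ((m+1+k).choose j : ℂ) - ∑ i ∈ Finset.range (k+1),
            ((-1:ℂ)^i * (k.choose i : ℂ) * ((m+1+k-i).choose j : ℂ)) := by
      have h1 := Finset.sum_range_succ'
        (fun i => ((-1:ℂ)^i * (k.choose i : ℂ) * ((m+1+k-i).choose j : ℂ))) (k+1)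
      have h2 := Finset.sum_range_succ
        (fun i => ((-1:ℂ)^i * (k.choose i : ℂ) * ((m+1+k-i).choose j : ℂ))) (k+1)
      rw [h2] at h1
      simp only [Nat.choose_succ_self, Nat.cast_zero, mul_zero, zero_mul, add_zero,
        pow_zero, Nat.choose_zero_right, Nat.cast_one, one_mul, mul_one, Nat.sub_zero] at h1
      have h3 : ∀ i ∈ Finset.range (k+1),
          ((-1:ℂ)^(i+1) * (k.choose (i+1) : ℂ) * ((m+1+k-(i+1)).choose j : ℂ))
          = -((-1:ℂ)^i * (k.choose (i+1) : ℂ) * ((m+k-i).choose j : ℂ)) := by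
        intro i hi
        have he : m+1+k-(i+1) = m+k-i := by omega
        rw [he, pow_succ]
        ring
      rw [Finset.sum_congr rfl h3, Finset.sum_neg_distrib] at h1
      linear_combination h1
    calc ∑ i ∈ Finset.range (k+1+1),
          ((-1:ℂ)^i * ((k+1).choose i : ℂ) * ((m+(k+1)-i).choose j : ℂ))
        = ∑ i ∈ Finset.range (k+1),
            ((-1:ℂ)^(i+1) * ((k+1).choose (i+1) : ℂ) * ((m+(k+1)-(i+1)).choose j : ℂ))
          + ((m+1+k).choose j : ℂ) := by
          rw [Finset.sum_range_succ']
          congr 1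
          have he : m+(k+1)-0 = m+1+k := by omega
          rw [he]
          simp
      _ = (∑ i ∈ Finset.range (k+1),
            ((-1:ℂ)^i * (k.choose i : ℂ) * ((m+1+k-i).choose j : ℂ)))
          - ∑ i ∈ Finset.range (k+1),
            ((-1:ℂ)^i * (k.choose i : ℂ) * ((m+k-i).choose j : ℂ)) := by
          have h4 : ∀ i ∈ Finset.range (k+1),
              ((-1:ℂ)^(i+1) * ((k+1).choose (i+1) : ℂ) * ((m+(k+1)-(i+1)).choose j : ℂ))
              = -((-1:ℂ)^i * (k.choose i : ℂ) * ((m+k-i).choose j : ℂ))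
                - ((-1:ℂ)^i * (k.choose (i+1) : ℂ) * ((m+k-i).choose j : ℂ)) := by
            intro i hi
            have he : m+(k+1)-(i+1) = m+k-i := by omega
            rw [he, Nat.choose_succ_succ, pow_succ]
            push_cast
            ring
          rw [Finset.sum_congr rfl h4, Finset.sum_sub_distrib, Finset.sum_neg_distrib, hT]
          ring
      _ = if k+1 ≤ j then ((m.choose (j-(k+1)) : ℂ)) else 0 := by
          have ih1 := ih (m+1) j
          have ih2 := ih m j
          rw [ih1, ih2]
          by_cases h : k + 1 ≤ j
          · have hk : k ≤ j := by omega
            simp only [if_pos hk, if_pos h]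
            have : j - k = (j - (k+1)) + 1 := by omega
            rw [this, Nat.choose_succ_succ]
            push_cast
            ring
          · by_cases hk : k ≤ j
            · have : j = k := by omega
              subst this
              simp [if_neg h]
            · simp [if_neg h, if_neg hk]
              exact fun h' => absurd h' (by omega)

/-- A finsum whose coefficients vanish from `N` on is a finite range sum. -/
lemma finsum_coeff_smul (c : ℕ → ℂ) (x : ℕ → U) (N : ℕ) (h : ∀ i, N ≤ i → c i = 0) :
    ∑ᶠ i : ℕ, c i • x i = ∑ i ∈ Finset.range N, c i • x i := by
  apply finsum_eq_finset_sum_of_support_subset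
  intro i hi
  simp only [Function.mem_support] at hi
  simp only [Finset.coe_range, Set.mem_Iio]
  by_contra hn
  exact hi (by rw [h i (by omega), zero_smul])

/-- The key identity: a Jacobi defect is an explicit finite linear combination of
commutator defects. -/
lemma jacobi_eq_comb (A : VLAJSS U) (u v w : U) (k m n : ℕ) :
    (∑ᶠ i : ℕ, ((-1 : ℂ) ^ i * (Nat.choose k i : ℂ)) •
          (A.mul (m + k - i) u (A.mul (n + i) v w)
            - ((-1 : ℂ) ^ k) • A.mul (n + k - i) v (A.mul (m + i) u w)))
      - ∑ᶠ i : ℕ, ((Nat.choose m i : ℂ)) • A.mul (m + n - i) (A.mul (k + i) u v) w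
    = ∑ i ∈ Finset.range (k+1), ((-1 : ℂ) ^ i * (Nat.choose k i : ℂ)) •
        (A.mul (m + k - i) u (A.mul (n + i) v w)
          - A.mul (n + i) v (A.mul (m + k - i) u w)
          - ∑ᶠ j : ℕ, ((Nat.choose (m + k - i) j : ℂ)) •
              A.mul ((m + k - i) + (n + i) - j) (A.mul j u v) w) := by
  -- convert the finsums to range sums
  have hc1 : ∀ i : ℕ, k + 1 ≤ i → ((-1 : ℂ) ^ i * (Nat.choose k i : ℂ)) = 0 := by
    intro i hi
    rw [Nat.choose_eq_zero_of_lt (by omega : k < i)]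
    simp
  have hc2 : ∀ i : ℕ, m + 1 ≤ i → ((Nat.choose m i : ℂ)) = 0 := by
    intro i hi
    rw [Nat.choose_eq_zero_of_lt (by omega : m < i)]
    simp
  rw [finsum_coeff_smul _ _ (k+1) hc1]
  rw [finsum_coeff_smul _ _ (m+1) hc2]
  have hinner : ∀ i ∈ Finset.range (k+1),
      (∑ᶠ j : ℕ, ((Nat.choose (m + k - i) j : ℂ)) •
          A.mul ((m + k - i) + (n + i) - j) (A.mul j u v) w)
      = ∑ j ∈ Finset.range (m+k+1), ((Nat.choose (m + k - i) j : ℂ)) •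
          A.mul ((m + k - i) + (n + i) - j) (A.mul j u v) w := by
    intro i hi
    apply finsum_coeff_smul _ _ (m+k+1)
    intro j hj
    rw [Nat.choose_eq_zero_of_lt (by omega : m + k - i < j)]
    simp
  -- expand the right-hand side
  have expand : ∀ i ∈ Finset.range (k+1),
      ((-1 : ℂ) ^ i * (Nat.choose k i : ℂ)) •
        (A.mul (m + k - i) u (A.mul (n + i) v w)
          - A.mul (n + i) v (A.mul (m + k - i) u w)
          - ∑ᶠ j : ℕ, ((Nat.choose (m + k - i) j : ℂ)) •
              A.mul ((m + k - i) + (n + i) - j) (A.mul j u v) w)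
      = (((-1 : ℂ) ^ i * (Nat.choose k i : ℂ)) •
          A.mul (m + k - i) u (A.mul (n + i) v w)
        - ((-1 : ℂ) ^ i * (Nat.choose k i : ℂ)) •
            A.mul (n + i) v (A.mul (m + k - i) u w))
        - ∑ j ∈ Finset.range (m+k+1),
            (((-1 : ℂ) ^ i * (Nat.choose k i : ℂ) * (Nat.choose (m + k - i) j : ℂ))) •
              A.mul ((m + k - i) + (n + i) - j) (A.mul j u v) w := by
    intro i hi
    rw [hinner i hi, smul_sub, smul_sub, Finset.smul_sum]
    congr 1
    apply Finset.sum_congr rfl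
    intro j hj
    rw [smul_smul]
  rw [Finset.sum_congr rfl expand, Finset.sum_sub_distrib, Finset.sum_sub_distrib]
  -- expand the left-hand side first sum
  have expandL : ∀ i ∈ Finset.range (k+1),
      ((-1 : ℂ) ^ i * (Nat.choose k i : ℂ)) •
        (A.mul (m + k - i) u (A.mul (n + i) v w)
          - ((-1 : ℂ) ^ k) • A.mul (n + k - i) v (A.mul (m + i) u w))
      = ((-1 : ℂ) ^ i * (Nat.choose k i : ℂ)) •
          A.mul (m + k - i) u (A.mul (n + i) v w)
        - ((-1 : ℂ) ^ i * (Nat.choose k i : ℂ) * (-1 : ℂ) ^ k) •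
            A.mul (n + k - i) v (A.mul (m + i) u w) := by
    intro i hi
    rw [smul_sub, smul_smul]
  rw [Finset.sum_congr rfl expandL, Finset.sum_sub_distrib]
  -- the reflection identity for the middle terms
  have hY : ∑ i ∈ Finset.range (k+1),
      ((-1 : ℂ) ^ i * (Nat.choose k i : ℂ) * (-1 : ℂ) ^ k) •
        A.mul (n + k - i) v (A.mul (m + i) u w)
      = ∑ i ∈ Finset.range (k+1),
        ((-1 : ℂ) ^ i * (Nat.choose k i : ℂ)) •
          A.mul (n + i) v (A.mul (m + k - i) u w) := by
    rw [← Finset.sum_range_reflect (fun i => ((-1 : ℂ) ^ i * (Nat.choose k i : ℂ)) •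
          A.mul (n + i) v (A.mul (m + k - i) u w)) (k+1)]
    apply Finset.sum_congr rfl
    intro i hi
    have hik : i ≤ k := by simpa [Nat.lt_succ_iff] using hi
    have h1 : k + 1 - 1 - i = k - i := by omega
    have h2 : n + (k - i) = n + k - i := by omega
    have h3 : m + k - (k - i) = m + i := by omega
    have h4 : (k.choose (k - i) : ℂ) = (k.choose i : ℂ) := by
      rw [Nat.choose_symm hik]
    have h5 : (-1 : ℂ) ^ (k - i) = (-1 : ℂ) ^ i * (-1 : ℂ) ^ k := by
      have h6 : k - i + 2 * i = i + k := by omega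
      calc (-1 : ℂ) ^ (k - i) = (-1 : ℂ) ^ (k - i) * ((-1 : ℂ) ^ 2) ^ i := by norm_num
        _ = (-1 : ℂ) ^ (k - i + 2 * i) := by rw [← pow_mul, ← pow_add]
        _ = (-1 : ℂ) ^ (i + k) := by rw [h6]
        _ = (-1 : ℂ) ^ i * (-1 : ℂ) ^ k := by rw [pow_add]
    rw [h1, h2, h3, h4, h5]
    congr 1
    ring
  -- the double sum identity for the last terms
  have hZ : ∑ i ∈ Finset.range (k+1),
      ∑ j ∈ Finset.range (m+k+1),
        (((-1 : ℂ) ^ i * (Nat.choose k i : ℂ) * (Nat.choose (m + k - i) j : ℂ))) •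
          A.mul ((m + k - i) + (n + i) - j) (A.mul j u v) w
      = ∑ i ∈ Finset.range (m+1),
          ((Nat.choose m i : ℂ)) • A.mul (m + n - i) (A.mul (k + i) u v) w := by
    have hidx : ∀ i ∈ Finset.range (k+1), ∀ j ∈ Finset.range (m+k+1),
        (((-1 : ℂ) ^ i * (Nat.choose k i : ℂ) * (Nat.choose (m + k - i) j : ℂ))) •
          A.mul ((m + k - i) + (n + i) - j) (A.mul j u v) w
        = (((-1 : ℂ) ^ i * (Nat.choose k i : ℂ) * (Nat.choose (m + k - i) j : ℂ))) •
          A.mul (m + n + k - j) (A.mul j u v) w := by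
      intro i hi j hj
      have hik : i ≤ k := by simpa [Nat.lt_succ_iff] using hi
      have : (m + k - i) + (n + i) - j = m + n + k - j := by omega
      rw [this]
    rw [Finset.sum_congr rfl (fun i hi => Finset.sum_congr rfl (hidx i hi))]
    rw [Finset.sum_comm]
    have hj : ∀ j ∈ Finset.range (m+k+1),
        ∑ i ∈ Finset.range (k+1),
          (((-1 : ℂ) ^ i * (Nat.choose k i : ℂ) * (Nat.choose (m + k - i) j : ℂ))) •
            A.mul (m + n + k - j) (A.mul j u v) w
        = (if k ≤ j then ((m.choose (j-k) : ℂ)) else 0) •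
            A.mul (m + n + k - j) (A.mul j u v) w := by
      intro j _
      rw [← Finset.sum_smul, binom_alt]
    rw [Finset.sum_congr rfl hj]
    -- split the range at k
    have hsplit : ∑ j ∈ Finset.range (m+k+1),
        (if k ≤ j then ((m.choose (j-k) : ℂ)) else 0) •
          A.mul (m + n + k - j) (A.mul j u v) w
        = ∑ j ∈ Finset.Ico k (m+k+1),
            (if k ≤ j then ((m.choose (j-k) : ℂ)) else 0) •
              A.mul (m + n + k - j) (A.mul j u v) w := by
      rw [Finset.range_eq_Ico,
        ← Finset.sum_Ico_consecutive _ (Nat.zero_le k) (by omega : k ≤ m+k+1)]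
      have : ∑ j ∈ Finset.Ico 0 k,
          (if k ≤ j then ((m.choose (j-k) : ℂ)) else 0) •
            A.mul (m + n + k - j) (A.mul j u v) w = 0 := by
        apply Finset.sum_eq_zero
        intro j hjm
        have : ¬ k ≤ j := by
          simp only [Finset.mem_Ico] at hjm
          omega
        rw [if_neg this, zero_smul]
      rw [this, zero_add]
    rw [hsplit, Finset.sum_Ico_eq_sum_range]
    have : m + k + 1 - k = m + 1 := by omega
    rw [this]
    apply Finset.sum_congr rfl
    intro i hi
    have him : i ≤ m := by simpa [Nat.lt_succ_iff] using hi
    have e1 : k + i - k = i := by omega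
    have e2 : m + n + k - (k + i) = m + n - i := by omega
    rw [if_pos (by omega : k ≤ k + i), e1, e2]
  rw [hY, hZ]

/-- for a VLA-J-SS, the linear span of the commutator defect vectors
equals the linear span of the Jacobi defect vectors. -/
theorem stmt10 (A : VLAJSS U) :
    Submodule.span ℂ (CommDefects A) = Submodule.span ℂ (JacobiDefects A) := by
  refine le_antisymm (Submodule.span_le.2 ?_) (Submodule.span_le.2 ?_)
  · rintro x ⟨u, v, w, m, n, rfl⟩
    apply Submodule.subset_span
    refine ⟨u, v, w, 0, m, n, ?_⟩
    rw [jacobi_eq_comb A u v w 0 m n]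
    simp
  · rintro x ⟨u, v, w, k, m, n, rfl⟩
    rw [jacobi_eq_comb A u v w k m n]
    apply Submodule.sum_mem
    intro i _
    exact Submodule.smul_mem _ _
      (Submodule.subset_span ⟨u, v, w, m + k - i, n + i, rfl⟩)

end
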